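/- Let f(X) ∈ k[X] be a polynomial with no zero in k and π ∈ k nonzero. Then the polynomial g(X,Y) = f(X)·Y² + f(X)·Y + π, viewed via the substitution Y = Z⁻¹ as π·Z² + f(X)·Z + f(X), is irreducible over the algebraic closure of k as a polynomial in Z over k[X] by Eisenstein's criterion at a prime divisor of f; in particular g(X,Y) is absolutely irreducible. -/
import Mathlib

open Polynomial

/-- Over a domain, a polynomial with nonzero constant coefficient whose reverse is
irreducible is itself irreducible. -/
lemma irreducible_of_reverse_irreducible {R : Type*} [CommRing R] [IsDomain R]
    {p : R[X]} (h0 : p.coeff 0 ≠ 0) (h : Irreducible p.reverse) : Irreducible p := by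
  constructor
  · intro hu
    rcases Polynomial.isUnit_iff.mp hu with ⟨u, hu', hc⟩
    exact h.not_isUnit (by rw [← hc, reverse_C]; exact hu'.map Polynomial.C)
  · intro a b hab
    have ha0 : a.coeff 0 ≠ 0 := fun hz => h0 (by rw [hab, mul_coeff_zero, hz, zero_mul])
    have hb0 : b.coeff 0 ≠ 0 := fun hz => h0 (by rw [hab, mul_coeff_zero, hz, mul_zero])
    have hrev : p.reverse = a.reverse * b.reverse := by
      rw [hab, reverse_mul_of_domain]
    rcases h.isUnit_or_isUnit hrev with hu | hu
    · left
      have hnd : a.reverse.natDegree = 0 := natDegree_eq_zero_of_isUnit hu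
      rw [reverse_natDegree] at hnd
      have hta : a.natTrailingDegree = 0 :=
        natTrailingDegree_eq_zero.mpr (Or.inr ha0)
      have hda : a.natDegree = 0 := by omega
      have : a = C (a.coeff 0) := eq_C_of_natDegree_eq_zero hda
      rw [this] at hu ⊢
      rwa [reverse_C] at hu
    · right
      have hnd : b.reverse.natDegree = 0 := natDegree_eq_zero_of_isUnit hu
      rw [reverse_natDegree] at hnd
      have htb : b.natTrailingDegree = 0 :=
        natTrailingDegree_eq_zero.mpr (Or.inr hb0)
      have hdb : b.natDegree = 0 := by omega
      have : b = C (b.coeff 0) := eq_C_of_natDegree_eq_zero hdb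
      rw [this] at hu ⊢
      rwa [reverse_C] at hu

theorem g_absolutely_irreducible
    {k : Type*} [Field k] (f : Polynomial k) (hdeg : 0 < f.natDegree)
    (hsep : f.Separable) (hnoroot : ∀ x : k, f.eval x ≠ 0)
    (π : k) (hπ : π ≠ 0) :
    Irreducible
      ((Polynomial.C f * Polynomial.X ^ 2 + Polynomial.C f * Polynomial.X +
          Polynomial.C (Polynomial.C π)).map
        (Polynomial.mapRingHom (algebraMap k (AlgebraicClosure k)))) := by
  set K := AlgebraicClosure k
  set φ := algebraMap k K
  set F : K[X] := f.map φ with hF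
  have hφinj : Function.Injective φ := (algebraMap k K).injective
  have hFdeg : F.natDegree = f.natDegree := natDegree_map_eq_of_injective hφinj f
  have hFne : F ≠ 0 := by
    intro h
    have := hFdeg
    rw [h, natDegree_zero] at this
    omega
  have hπ' : φ π ≠ 0 := fun h => hπ (hφinj (by rwa [map_zero]))
  -- rewrite the mapped polynomial
  have hmap :
      ((C f * X ^ 2 + C f * X + C (C π)).map (mapRingHom φ)) =
        C F * X ^ 2 + C F * X + C (C (φ π)) := by
    simp [Polynomial.map_add, Polynomial.map_mul, Polynomial.map_pow, map_C, map_X,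
      coe_mapRingHom, hF]
  rw [hmap]
  -- pick a root α of F
  obtain ⟨α, hα⟩ := IsAlgClosed.exists_root F (by
    rw [degree_eq_natDegree hFne, hFdeg]
    intro h
    have : f.natDegree = 0 := by exact_mod_cast h
    omega)
  -- set up the Eisenstein prime
  set P : Ideal K[X] := Ideal.span {X - C α} with hP
  have hprime : Prime (X - C α : K[X]) := prime_X_sub_C α
  have hPprime : P.IsPrime := (Ideal.span_singleton_prime hprime.ne_zero).mpr hprime
  have hFmem : F ∈ P := by
    rw [hP, Ideal.mem_span_singleton]
    exact dvd_iff_isRoot.mpr hα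
  have hFsq : F ∉ P ^ 2 := by
    rw [hP, Ideal.span_singleton_pow, Ideal.mem_span_singleton]
    intro hdvd
    have hsq : Squarefree F := (hsep.map).squarefree
    have := hsq (X - C α) (by rwa [← sq])
    exact hprime.not_isUnit this
  have hπP : (C (φ π) : K[X]) ∉ P := by
    rw [hP, Ideal.mem_span_singleton]
    intro hdvd
    have := natDegree_le_of_dvd hdvd (by simp [hπ'])
    simp [hπ'] at this
  -- the reversed polynomial r
  set r : K[X][X] := C (C (φ π)) * X ^ 2 + C F * X + C F with hr
  have hrdeg : r.natDegree = 2 := natDegree_quadratic (by simpa using hπ')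
  have hrcoeff0 : r.coeff 0 = F := by simp [hr, coeff_add]
  have hrcoeff1 : r.coeff 1 = F := by simp [hr, coeff_add, coeff_C_mul, coeff_X_pow]
  have hrlead : r.leadingCoeff = C (φ π) := by
    rw [leadingCoeff, hrdeg]
    simp [hr, coeff_add, coeff_C_mul, coeff_X_pow]
  have hEis : r.IsEisensteinAt P := by
    refine ⟨?_, ?_, ?_⟩
    · rw [hrlead]; exact hπP
    · intro n hn
      rw [hrdeg] at hn
      interval_cases n
      · rw [hrcoeff0]; exact hFmem
      · rw [hrcoeff1]; exact hFmem
    · rw [hrcoeff0]; exact hFsq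
  have hprim : r.IsPrimitive := by
    intro c hc
    have hdvd := (C_dvd_iff_dvd_coeff c r).mp hc 2
    have h2 : r.coeff 2 = C (φ π) := by
      simp [hr, coeff_add, coeff_C_mul, coeff_X_pow]
    rw [h2] at hdvd
    exact isUnit_of_dvd_unit hdvd (isUnit_C.mpr (hπ'.isUnit))
  have hrirr : Irreducible r := hEis.irreducible hPprime hprim (by omega)
  -- g is the reverse of r ... rather, g.reverse = r
  apply irreducible_of_reverse_irreducible
  · simpa using hπ'
  · have hgdeg : (C F * X ^ 2 + C F * X + C (C (φ π)) : K[X][X]).natDegree = 2 :=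
      natDegree_quadratic hFne
    have : (C F * X ^ 2 + C F * X + C (C (φ π)) : K[X][X]).reverse = r := by
      unfold Polynomial.reverse
      rw [hgdeg]
      rw [reflect_add, reflect_add, reflect_C_mul_X_pow]
      have h1 : (C F * X : K[X][X]) = C F * X ^ 1 := by ring
      rw [h1, reflect_C_mul_X_pow, reflect_C]
      simp [hr]
      ring
    rw [this]
    exact hrirr
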